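/- Let X be a td-lcsc space, let σ : X → X be a surjective local homeomorphism, and let φ : X → X be a continuous section of σ (σ ∘ φ = id). For a ∈ ℤ define ψ_a : X → X by ψ_a = φ^a (the a-fold iterate of φ) if a ≥ 0, and ψ_a = σ^{−a} if a < 0. Then for all x, y ∈ X, all m, n ∈ ℕ with σ^m(x) = σ^n(y), and all a ∈ ℤ, there exists N ∈ ℕ such that σ^N(ψ_a(x)) = σ^N(ψ_{a+(m−n)}(y)). (This is the well-definedness of the map ρ_φ(x, m−n, y, a) = (ψ_a(x), ψ_{a+m−n}(y)) from the skew-product Deaconu–Renault groupoid 𝒢(c) to the kernel groupoid c⁻¹(0).) -/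
import Mathlib

/-- `ψ_a = φ^a` for `a ≥ 0` and `ψ_a = σ^{-a}` for `a < 0`. -/
noncomputable def psiMap {X : Type*} (σ φ : X → X) (a : ℤ) : X → X :=
  if 0 ≤ a then φ^[a.toNat] else σ^[(-a).toNat]

/-- Well-definedness of the map
`ρ_φ(x, m−n, y, a) = (ψ_a(x), ψ_{a+(m−n)}(y))` from the skew product
`𝒢(c)` of the Deaconu–Renault groupoid to the kernel groupoid `c⁻¹(0)`. -/
theorem rho_phi_welldefined
    {X : Type*} [TopologicalSpace X]
    [LocallyCompactSpace X] [T2Space X] [SecondCountableTopology X]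
    [TotallyDisconnectedSpace X]
    (σ : X → X) (hσ : IsLocalHomeomorph σ) (hsurj : Function.Surjective σ)
    (φ : X → X) (hφ : Continuous φ) (hsec : ∀ x : X, σ (φ x) = x) :
    ∀ (x y : X) (m n : ℕ) (a : ℤ),
      σ^[m] x = σ^[n] y →
      ∃ N : ℕ,
        σ^[N] (psiMap σ φ a x) =
          σ^[N] (psiMap σ φ (a + ((m : ℤ) - (n : ℤ))) y) := by
  have hcanc : ∀ (k : ℕ) (z : X), σ^[k] (φ^[k] z) = z := by
    intro k
    induction k with
    | zero => intro z; simp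
    | succ k ih =>
      intro z
      rw [Function.iterate_succ_apply' φ, Function.iterate_succ_apply σ, hsec, ih]
  have key : ∀ (a : ℤ) (N : ℕ) (z : X), a ≤ (N : ℤ) →
      σ^[N] (psiMap σ φ a z) = σ^[((N : ℤ) - a).toNat] z := by
    intro a N z haN
    unfold psiMap
    by_cases ha : 0 ≤ a
    · rw [if_pos ha]
      have h1 : N = ((N : ℤ) - a).toNat + a.toNat := by omega
      conv_lhs => rw [h1, Function.iterate_add_apply, hcanc]
    · rw [if_neg ha, ← Function.iterate_add_apply]
      congr 1
      omega
  intro x y m n a hmn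
  refine ⟨(a + m).toNat, ?_⟩
  set N : ℕ := (a + m).toNat with hN
  rw [key a N x (by omega), key (a + ((m : ℤ) - n)) N y (by omega)]
  have h2 : ((N : ℤ) - a).toNat = ((N : ℤ) - a - m).toNat + m := by omega
  have h3 : ((N : ℤ) - (a + ((m : ℤ) - n))).toNat = ((N : ℤ) - a - m).toNat + n := by omega
  rw [h2, h3, Function.iterate_add_apply, Function.iterate_add_apply, hmn]
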